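/- Let X and H be real Hilbert spaces and let ι : X → H be an injective compact continuous linear map. Let M ∈ ℕ and let e_1, …, e_M ∈ X be such that ⟨ι e_i, ι e_j⟩_H = δ_{ij} for all 1 ≤ i,j ≤ M. Define P : H → H by P h = Σ_{i=1}^M ⟨h, ι e_i⟩_H ι e_i and f : X → ℝ by f(u) = (1/2)‖u‖_X² − ‖ι u − P(ι u)‖_H. Suppose û ∈ X satisfies û ≠ 0, ⟨ι û, ι e_i⟩_H = 0 for all i = 1,…,M, and û is a critical point of f, i.e. lim_{t→0} (f(û + t v) − f(û))/t = 0 for every v ∈ X. Then ⟨û, v⟩_X = ‖ι û‖_H^{-1} ⟨ι û, ι v⟩_H for all v ∈ X; that is, û is an eigenvector of the variational eigenvalue problem ⟨u, v⟩_X = μ ⟨ι u, ι v⟩_H with eigenvalue μ = ‖ι û‖_H^{-1}. -/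

import Mathlib

open scoped RealInnerProductSpace
open Filter

private lemma hasDerivAt_norm_line {H : Type*} [NormedAddCommGroup H]
    [InnerProductSpace ℝ H] (a w : H) (ha : a ≠ 0) :
    HasDerivAt (fun t : ℝ => ‖a + t • w‖) (⟪a, w⟫ / ‖a‖) 0 := by
  have hline : HasDerivAt (fun t : ℝ => a + t • w) w 0 := by
    simpa using ((hasDerivAt_id (0 : ℝ)).smul_const w).const_add a
  have hsq : HasDerivAt (fun t : ℝ => ‖a + t • w‖ ^ 2) (2 * ⟪a, w⟫) 0 := by
    simpa using hline.norm_sq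
  have hne : ‖a + (0 : ℝ) • w‖ ^ 2 ≠ 0 := by
    simpa using pow_ne_zero 2 (norm_ne_zero_iff.2 ha)
  have := hsq.sqrt (by simpa using hne)
  have heq : (fun t : ℝ => Real.sqrt (‖a + t • w‖ ^ 2)) = fun t : ℝ => ‖a + t • w‖ := by
    funext t; rw [Real.sqrt_sq (norm_nonneg _)]
  rw [heq] at this
  convert this using 1
  rw [zero_smul, add_zero, Real.sqrt_sq (norm_nonneg _)]
  ring

/-- Critical points of the Auchmuty-type functional
`f(u) = (1/2)‖u‖² − ‖ι u - P(ι u)‖`, where `P h = Σ_{i<M} ⟪h, ι e_i⟫ ι e_i` and the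
`ι e_i` are orthonormal in `H`, that are `H`-orthogonal to the `ι e_i` and nonzero, are
eigenvectors of the variational problem `⟪u, v⟫_X = μ ⟪ι u, ι v⟫_H` with
`μ = ‖ι uhat‖⁻¹`. -/
theorem stmt_11 {X H : Type*}
    [NormedAddCommGroup X] [InnerProductSpace ℝ X] [CompleteSpace X]
    [NormedAddCommGroup H] [InnerProductSpace ℝ H] [CompleteSpace H]
    (ι : X →L[ℝ] H) (hinj : Function.Injective ι) (hcomp : IsCompactOperator ι)
    (M : ℕ) (e : Fin M → X)
    (horth : ∀ i j : Fin M, ⟪ι (e i), ι (e j)⟫ = if i = j then (1 : ℝ) else 0)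
    (P : H → H) (hP : ∀ h : H, P h = ∑ i : Fin M, ⟪h, ι (e i)⟫ • ι (e i))
    (f : X → ℝ) (hf : ∀ u : X, f u = (1 / 2) * ‖u‖ ^ 2 - ‖ι u - P (ι u)‖)
    (uhat : X) (hne : uhat ≠ 0) (hperp : ∀ i : Fin M, ⟪ι uhat, ι (e i)⟫ = 0)
    (hcrit : ∀ v : X,
      Tendsto (fun t : ℝ => (f (uhat + t • v) - f uhat) / t) (nhdsWithin 0 {0}ᶜ)
        (nhds 0)) :
    ∀ v : X, ⟪uhat, v⟫ = ‖ι uhat‖⁻¹ * ⟪ι uhat, ι v⟫ := by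
  intro v
  set a : H := ι uhat with ha_def
  have ha : a ≠ 0 := fun h => hne (hinj (by simpa [ha_def] using h))
  set w : H := ι v - P (ι v) with hw_def
  -- the functional along the line
  have hkey : ∀ t : ℝ, f (uhat + t • v) = (1 / 2) * ‖uhat + t • v‖ ^ 2 - ‖a + t • w‖ := by
    intro t
    rw [hf]
    congr 1
    have hι : ι (uhat + t • v) = a + t • ι v := by
      simp [ha_def, map_add, map_smul]
    have hPt : P (a + t • ι v) = t • P (ι v) := by
      rw [hP, hP, Finset.smul_sum]
      refine Finset.sum_congr rfl fun i _ => ?_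
      rw [inner_add_left, inner_smul_left, hperp i, smul_smul]
      simp [RCLike.conj_to_real]
    rw [hι, hPt, hw_def]
    congr 1
    module
  -- inner product with w
  have hinner_w : ⟪a, w⟫ = ⟪a, ι v⟫ := by
    rw [hw_def, inner_sub_right, hP, inner_sum]
    have : ∀ i : Fin M, ⟪a, (⟪ι v, ι (e i)⟫ : ℝ) • ι (e i)⟫ = (0 : ℝ) := by
      intro i
      rw [real_inner_smul_right, hperp i, mul_zero]
    rw [Finset.sum_congr rfl fun i _ => this i]
    simp
  -- derivative of first term
  have h1 : HasDerivAt (fun t : ℝ => (1 / 2) * ‖uhat + t • v‖ ^ 2) ⟪uhat, v⟫ 0 := by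
    have hline : HasDerivAt (fun t : ℝ => uhat + t • v) v 0 := by
      simpa using ((hasDerivAt_id (0 : ℝ)).smul_const v).const_add uhat
    have := hline.norm_sq.const_mul (1 / 2 : ℝ)
    simpa using this
  have h2 := hasDerivAt_norm_line a w ha
  have hphi : HasDerivAt (fun t : ℝ => f (uhat + t • v)) (⟪uhat, v⟫ - ⟪a, w⟫ / ‖a‖) 0 := by
    have := h1.sub h2
    simpa only [Pi.sub_def, ← hkey] using this
  -- the derivative is the limit of the difference quotient
  have hslope : Tendsto (fun t : ℝ => (f (uhat + t • v) - f uhat) / t)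
      (nhdsWithin 0 {0}ᶜ) (nhds (⟪uhat, v⟫ - ⟪a, w⟫ / ‖a‖)) := by
    have := hasDerivAt_iff_tendsto_slope.1 hphi
    have heq : slope (fun t : ℝ => f (uhat + t • v)) 0 =
        fun t : ℝ => (f (uhat + t • v) - f uhat) / t := by
      funext t
      simp [slope_def_field, zero_smul]
    rwa [heq] at this
  have hzero : ⟪uhat, v⟫ - ⟪a, w⟫ / ‖a‖ = 0 :=
    tendsto_nhds_unique hslope (hcrit v)
  have : ⟪uhat, v⟫ = ⟪a, w⟫ / ‖a‖ := by linarith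
  rw [this, hinner_w, div_eq_inv_mul, ha_def]
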